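/- For all integers α ≥ 0 and j ≥ 1, the integer y_{α,j} is divisible by 3^{α+1+3(j−1)}; that is, ν₃(y_{α,j}) ≥ α + 1 + 3(j−1). -/
import Mathlib

def m : ℕ → ℕ → ℤ
  | 0, _ => 0
  | _, 0 => 0
  | 1, j => if j = 1 then 3 else 0
  | 2, j => if j = 1 then 2 else if j = 2 then 27 else 0
  | 3, j => if j = 1 then 1 else if j = 2 then 27 else if j = 3 then 243 else 0
  | i + 4, j + 1 =>
    if i + 4 < j + 1 then 0
    else 9 * m (i + 3) j + 3 * m (i + 2) j + m (i + 1) j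

def c (i j : ℕ) : ℤ := m (4 * i) (i + j)

def y : ℕ → ℕ → ℤ
  | 0, i => if i = 1 then 3 else 0
  | α + 1, j => ∑ i ∈ Finset.Icc 1 (3 ^ α), y α i * c i j

lemma m_dvd : ∀ n k : ℕ, (3:ℤ) ^ (3 * k) ∣ 3 ^ (n + 1) * m n k := by
  intro n
  induction n using Nat.strong_induction_on with
  | _ n ih =>
    match n with
    | 0 => intro k; simp [m]
    | 1 => intro k
           rcases k with _ | _ | k <;> simp [m] <;> norm_num
    | 2 => intro k
           rcases k with _ | _ | _ | k <;> simp [m] <;> norm_num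
    | 3 => intro k
           rcases k with _ | _ | _ | _ | k <;> simp [m] <;> norm_num
    | (n + 4) =>
      intro k
      rcases k with _ | k
      · simp [m]
      · show (3:ℤ) ^ (3 * (k+1)) ∣ 3 ^ (n + 4 + 1) * m (n + 4) (k + 1)
        rw [show m (n + 4) (k + 1) = if n + 4 < k + 1 then 0
            else 9 * m (n + 3) k + 3 * m (n + 2) k + m (n + 1) k from rfl]
        split
        · simp
        · have h1 := ih (n + 3) (by omega) k
          have h2 := ih (n + 2) (by omega) k
          have h3 := ih (n + 1) (by omega) k
          have key : (3:ℤ) ^ (n + 4 + 1) * (9 * m (n + 3) k + 3 * m (n + 2) k + m (n + 1) k)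
              = 27 * (3 ^ (n + 3 + 1) * m (n + 3) k) + 27 * (3 ^ (n + 2 + 1) * m (n + 2) k)
                + 27 * (3 ^ (n + 1 + 1) * m (n + 1) k) := by ring
          rw [key, show 3 * (k + 1) = 3 * k + 3 by ring, pow_add]
          have h27 : (3:ℤ) ^ 3 = 27 := by norm_num
          exact dvd_add (dvd_add (by rw [mul_comm ((3:ℤ)^(3*k))]; exact mul_dvd_mul (by rw [h27]) h1)
            (by rw [mul_comm ((3:ℤ)^(3*k))]; exact mul_dvd_mul (by rw [h27]) h2))
            (by rw [mul_comm ((3:ℤ)^(3*k))]; exact mul_dvd_mul (by rw [h27]) h3)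

lemma y_dvd : ∀ α j : ℕ, (3:ℤ) ^ (α + 1 + 3 * j) ∣ y α (j + 1) := by
  intro α
  induction α with
  | zero =>
    intro j
    rcases j with _ | j <;> simp [y]
  | succ α ih =>
    intro j
    show (3:ℤ) ^ (α + 1 + 1 + 3 * j) ∣ ∑ i ∈ Finset.Icc 1 (3 ^ α), y α i * c i (j + 1)
    refine Finset.dvd_sum ?_
    intro i hi
    have hi1 : 1 ≤ i := (Finset.mem_Icc.mp hi).1
    obtain ⟨i', rfl⟩ : ∃ i', i = i' + 1 := ⟨i - 1, by omega⟩
    have h1 := ih i'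
    have h2 := m_dvd (4 * (i' + 1)) ((i' + 1) + (j + 1))
    have hc : c (i' + 1) (j + 1) = m (4 * (i' + 1)) ((i' + 1) + (j + 1)) := rfl
    rw [← hc] at h2
    have hmul := mul_dvd_mul h1 h2
    have hE : (3:ℤ) ^ (α + 1 + 3 * i') * 3 ^ (3 * ((i' + 1) + (j + 1)))
        = 3 ^ (4 * (i' + 1) + 1) * 3 ^ (α + 2 * i' + 3 * j + 2) := by
      rw [← pow_add, ← pow_add]; ring_nf
    rw [hE] at hmul
    have hre : y α (i' + 1) * (3 ^ (4 * (i' + 1) + 1) * c (i' + 1) (j + 1))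
        = 3 ^ (4 * (i' + 1) + 1) * (y α (i' + 1) * c (i' + 1) (j + 1)) := by ring
    rw [hre] at hmul
    have hcancel : (3:ℤ) ^ (α + 2 * i' + 3 * j + 2) ∣ y α (i' + 1) * c (i' + 1) (j + 1) :=
      (mul_dvd_mul_iff_left (a := (3:ℤ) ^ (4 * (i' + 1) + 1)) (by positivity)).mp hmul
    exact dvd_trans (pow_dvd_pow 3 (by omega)) hcancel

theorem y_valuation (α j : ℕ) (hj : 1 ≤ j) :
    (3 : ℤ) ^ (α + 1 + 3 * (j - 1)) ∣ y α j := by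
  obtain ⟨j', rfl⟩ : ∃ j', j = j' + 1 := ⟨j - 1, by omega⟩
  simpa using y_dvd α j'
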